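/- Existence for large λ: there exists λ* > 0 such that for all λ ≥ λ*, the equation Δv = -λ e^{g(v₀+v)}(e^{g(v₀+v)}-1)² + 4πN/|V| has a solution on the finite connected graph G. -/

import Mathlib

open Finset Real

private lemma aux_h_mono : Monotone (fun s : ℝ => Real.exp s * (Real.exp s - 1)^2 + 2*(1 + s - Real.exp s)) := by
  have hd : ∀ s : ℝ, HasDerivAt (fun s : ℝ => Real.exp s * (Real.exp s - 1)^2 + 2*(1 + s - Real.exp s))
      ((Real.exp s - 1)^2 * (3 * Real.exp s + 2)) s := by
    intro s
    have hE := Real.hasDerivAt_exp s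
    have h1 : HasDerivAt (fun s : ℝ => Real.exp s * (Real.exp s - 1)^2)
        (Real.exp s * (Real.exp s - 1)^2 + Real.exp s * ((2:ℕ) * (Real.exp s - 1)^1 * Real.exp s)) s :=
      hE.mul ((hE.sub_const 1).pow 2)
    have h2 : HasDerivAt (fun s : ℝ => 2*(1 + s - Real.exp s)) (2 * (1 - Real.exp s)) s := by
      have : HasDerivAt (fun s : ℝ => 1 + s - Real.exp s) (1 - Real.exp s) s := by
        exact ((hasDerivAt_id' s).const_add 1).sub hE
      exact this.const_mul 2
    have h3 : HasDerivAt (fun s : ℝ => Real.exp s * (Real.exp s - 1)^2 + 2*(1 + s - Real.exp s)) _ s := h1.add h2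
    convert h3 using 1
    push_cast
    ring
  apply monotone_of_deriv_nonneg
  · exact fun s => (hd s).differentiableAt
  · intro s
    rw [(hd s).deriv]
    positivity

private lemma aux_f_smon : StrictMonoOn (fun s : ℝ => 1 + s - Real.exp s) (Set.Iic 0) := by
  apply strictMonoOn_of_deriv_pos (convex_Iic 0)
  · exact Continuous.continuousOn (by continuity)
  · intro x hx
    rw [interior_Iic] at hx
    have hdx : HasDerivAt (fun s : ℝ => 1 + s - Real.exp s) (1 - Real.exp x) x := by
      exact ((hasDerivAt_id' x).const_add 1).sub (Real.hasDerivAt_exp x)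
    rw [hdx.deriv]
    have : Real.exp x < 1 := Real.exp_lt_one_iff.mpr hx
    linarith

set_option maxHeartbeats 1000000 in
theorem stmt_15 {V : Type} [Fintype V] [DecidableEq V] (w : V → V → ℝ) (mu : V → ℝ)
    (hsymm : ∀ x y, w x y = w y x) (hnonneg : ∀ x y, 0 ≤ w x y)
    (hmu : ∀ x, 0 < mu x)
    (hconn : ∀ x y : V, Relation.ReflTransGen (fun a b => 0 < w a b) x y)
    (g : ℝ → ℝ)
    (hg : ∀ t ≤ (0:ℝ), 1 + g t - Real.exp (g t) = t)
    (hgneg : ∀ t ≤ (0:ℝ), g t ≤ 0)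
    (N : ℕ) (hN : 0 < N) (p : Fin N → V) (hp : Function.Injective p)
    (v0 : V → ℝ)
    (hv0 : ∀ x, (mu x)⁻¹ * ∑ y, w x y * (v0 y - v0 x) =
      -(4 * π * N) / (∑ z, mu z) +
        4 * π * ∑ j, (if x = p j then (mu (p j))⁻¹ else 0)) :
    ∃ lam₀ : ℝ, 0 < lam₀ ∧ ∀ lam : ℝ, lam₀ ≤ lam →
      ∃ v : V → ℝ, (∀ x, v0 x + v x < 0) ∧
        ∀ x, (mu x)⁻¹ * ∑ y, w x y * (v y - v x) =
          -lam * Real.exp (g (v0 x + v x)) * (Real.exp (g (v0 x + v x)) - 1) ^ 2 +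
            4 * π * N / (∑ z, mu z) := by
  classical
  have hNe : Nonempty V := ⟨p ⟨0, hN⟩⟩
  have hune : (Finset.univ : Finset V).Nonempty := Finset.univ_nonempty
  -- basic facts about g
  have hgmono : ∀ t t' : ℝ, t ≤ t' → t' ≤ 0 → g t ≤ g t' := by
    intro t t' htt ht'
    by_contra hlt
    push_neg at hlt
    have h1 : (fun s : ℝ => 1 + s - Real.exp s) (g t') < (fun s : ℝ => 1 + s - Real.exp s) (g t) :=
      aux_f_smon (Set.mem_Iic.mpr (hgneg t' ht')) (Set.mem_Iic.mpr (hgneg t (htt.trans ht'))) hlt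
    simp only at h1
    rw [hg t' ht', hg t (htt.trans ht')] at h1
    exact absurd h1 (not_lt.mpr htt)
  have hgneg' : ∀ t : ℝ, t < 0 → g t < 0 := by
    intro t ht
    rcases lt_or_eq_of_le (hgneg t ht.le) with h | h
    · exact h
    · exfalso
      have h2 := hg t ht.le
      rw [h] at h2
      simp at h2
      linarith
  have hg0 : g 0 = 0 := by
    by_contra hne
    have h := hg 0 le_rfl
    have h2 := Real.add_one_lt_exp hne
    linarith
  have hKlip : ∀ t t' : ℝ, t ≤ t' → t' ≤ 0 →
      Real.exp (g t) * (Real.exp (g t) - 1)^2 + 2*t ≤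
      Real.exp (g t') * (Real.exp (g t') - 1)^2 + 2*t' := by
    intro t t' htt ht'
    have hm : Real.exp (g t) * (Real.exp (g t) - 1)^2 + 2*(1 + g t - Real.exp (g t)) ≤
        Real.exp (g t') * (Real.exp (g t') - 1)^2 + 2*(1 + g t' - Real.exp (g t')) :=
      aux_h_mono (hgmono t t' htt ht')
    have e1 := hg t (htt.trans ht')
    have e2 := hg t' ht'
    linarith
  -- constants
  set M : ℝ := ∑ z, mu z with hMdef
  have hM : 0 < M := Finset.sum_pos (fun z _ => hmu z) hune
  set A : ℝ := 4 * π * (N:ℝ) / M with hAdef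
  have hA : 0 < A := by
    have hNpos : (0:ℝ) < (N:ℝ) := by exact_mod_cast hN
    have hπ := Real.pi_pos
    rw [hAdef]
    positivity
  set cmax : ℝ := Finset.univ.sup' hune v0 with hcmaxdef
  set cmin : ℝ := Finset.univ.inf' hune v0 with hcmindef
  have hv0le : ∀ x, v0 x ≤ cmax := fun x => Finset.le_sup' v0 (Finset.mem_univ x)
  have hv0ge : ∀ x, cmin ≤ v0 x := fun x => Finset.inf'_le v0 (Finset.mem_univ x)
  have hminmax : cmin ≤ cmax := le_trans (hv0ge (Classical.arbitrary V)) (hv0le _)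
  set c : ℝ := cmax + 1 with hcdef
  set a : ℝ := cmin - c with hadef
  have hg1 : g (-1) < 0 := hgneg' _ (by norm_num)
  set δ : ℝ := Real.exp (g a) * (1 - Real.exp (g (-1)))^2 with hδdef
  have hexp1 : Real.exp (g (-1)) < 1 := Real.exp_lt_one_iff.mpr hg1
  have hδ : 0 < δ := by
    have h6 := Real.exp_pos (g a)
    rw [hδdef]
    exact mul_pos h6 (pow_pos (by linarith) 2)
  have hKlow : ∀ t : ℝ, a ≤ t → t ≤ -1 → δ ≤ Real.exp (g t) * (Real.exp (g t) - 1)^2 := by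
    intro t h1 h2
    have hga : g a ≤ g t := hgmono a t h1 (by linarith)
    have hgt : g t ≤ g (-1) := hgmono t (-1) h2 (by norm_num)
    have h3 : Real.exp (g a) ≤ Real.exp (g t) := Real.exp_le_exp.mpr hga
    have h4 : Real.exp (g t) ≤ Real.exp (g (-1)) := Real.exp_le_exp.mpr hgt
    have h7 : (1 - Real.exp (g (-1)))^2 ≤ (Real.exp (g t) - 1)^2 := by nlinarith
    calc δ = Real.exp (g a) * (1 - Real.exp (g (-1)))^2 := hδdef
    _ ≤ Real.exp (g t) * (Real.exp (g t) - 1)^2 :=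
        mul_le_mul h3 h7 (by positivity) (Real.exp_pos _).le
  set D : ℝ := Finset.univ.sup' hune (fun x => (∑ y, w x y) / mu x) with hDdef
  have hDle : ∀ x, (∑ y, w x y) / mu x ≤ D := fun x => Finset.le_sup' (fun x => (∑ y, w x y) / mu x) (Finset.mem_univ x)
  have hD0 : 0 ≤ D := by
    refine le_trans ?_ (hDle (Classical.arbitrary V))
    exact div_nonneg (Finset.sum_nonneg fun y _ => hnonneg _ y) (hmu _).le
  refine ⟨max 1 (A/δ), lt_of_lt_of_le one_pos (le_max_left _ _), ?_⟩
  intro lam hlam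
  have hlam1 : (1:ℝ) ≤ lam := le_trans (le_max_left _ _) hlam
  have hlam0 : 0 < lam := lt_of_lt_of_le one_pos hlam1
  have hlamδ : A ≤ lam * δ := by
    have h := le_trans (le_max_right _ _) hlam
    rw [div_le_iff₀ hδ] at h
    linarith
  set ε : ℝ := (1 + D + 2*lam)⁻¹ with hεdef
  have hden : 0 < 1 + D + 2*lam := by linarith
  have hε : 0 < ε := inv_pos.mpr hden
  have hεid : ε * (1 + D + 2*lam) = 1 := inv_mul_cancel₀ (ne_of_gt hden)
  set T : (V → ℝ) → V → ℝ := fun v x => v x + ε * ((mu x)⁻¹ * (∑ y, w x y * (v y - v x)) +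
      lam * (Real.exp (g (v0 x + v x)) * (Real.exp (g (v0 x + v x)) - 1)^2) - A) with hTdef
  set vm : V → ℝ := fun _ => -c with hvmdef
  set vp : V → ℝ := fun x => -v0 x with hvpdef
  have hmle : ∀ x, vm x ≤ vp x := by
    intro x
    simp only [hvmdef, hvpdef, hcdef]
    linarith [hv0le x]
  -- L vp
  have hLvp : ∀ x, (mu x)⁻¹ * (∑ y, w x y * (vp y - vp x)) =
      A - 4 * π * ∑ j, (if x = p j then (mu (p j))⁻¹ else 0) := by
    intro x
    have h1 : ∑ y, w x y * (vp y - vp x) = -∑ y, w x y * (v0 y - v0 x) := by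
      rw [← Finset.sum_neg_distrib]
      refine Finset.sum_congr rfl fun y _ => ?_
      simp only [hvpdef]
      ring
    have h2 := hv0 x
    rw [h1]
    rw [show (mu x)⁻¹ * -(∑ y, w x y * (v0 y - v0 x)) = -((mu x)⁻¹ * ∑ y, w x y * (v0 y - v0 x)) by ring,
      h2, hAdef]
    ring
  -- monotonicity of T on the box
  have hTmono : ∀ v v' : V → ℝ, (∀ x, v x ≤ v' x) → (∀ x, v' x ≤ vp x) → ∀ x, T v x ≤ T v' x := by
    intro v v' hvv' hv'p x
    have hdx : 0 ≤ v' x - v x := sub_nonneg.mpr (hvv' x)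
    have hP : 0 ≤ ∑ y, w x y * (v' y - v y) :=
      Finset.sum_nonneg fun y _ => mul_nonneg (hnonneg x y) (sub_nonneg.mpr (hvv' y))
    have hrw : ∑ y, w x y * (v' y - v' x) = (∑ y, w x y * (v y - v x)) +
        ((∑ y, w x y * (v' y - v y)) - (∑ y, w x y) * (v' x - v x)) := by
      rw [Finset.sum_congr rfl (fun y (_ : y ∈ univ) =>
        show w x y * (v' y - v' x) = w x y * (v y - v x) + (w x y * (v' y - v y) - w x y * (v' x - v x)) by ring),
        Finset.sum_add_distrib, Finset.sum_sub_distrib, Finset.sum_mul]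
    have hu'0 : v0 x + v' x ≤ 0 := by
      have := hv'p x
      simp only [hvpdef] at this
      linarith
    have hK := hKlip (v0 x + v x) (v0 x + v' x) (by linarith [hvv' x]) hu'0
    have hmux := hmu x
    have hmi : 0 < (mu x)⁻¹ := inv_pos.mpr hmux
    have hSD : (mu x)⁻¹ * (∑ y, w x y) ≤ D := by
      have h := hDle x
      rw [div_eq_inv_mul] at h
      exact h
    have key2 : (mu x)⁻¹ * (∑ y, w x y) * (v' x - v x) ≤ D * (v' x - v x) :=
      mul_le_mul_of_nonneg_right hSD hdx
    simp only [hTdef]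
    rw [hrw]
    set d : ℝ := v' x - v x with hdd
    set S1 : ℝ := ∑ y, w x y * (v y - v x) with hS1
    set P1 : ℝ := ∑ y, w x y * (v' y - v y) with hP1
    set Sw : ℝ := ∑ y, w x y with hSwd
    set K1 : ℝ := Real.exp (g (v0 x + v x)) * (Real.exp (g (v0 x + v x)) - 1)^2 with hK1
    set K2 : ℝ := Real.exp (g (v0 x + v' x)) * (Real.exp (g (v0 x + v' x)) - 1)^2 with hK2
    clear_value d S1 P1 Sw K1 K2
    have hb2 : lam * (-(2*d)) ≤ lam * (K2 - K1) :=
      mul_le_mul_of_nonneg_left (by linarith) hlam0.le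
    have t2 : 0 ≤ (mu x)⁻¹ * P1 := mul_nonneg hmi.le hP
    have hbr : -(D*d) - lam*(2*d) ≤
        (mu x)⁻¹ * (S1 + (P1 - Sw*d)) + lam*K2 - ((mu x)⁻¹*S1 + lam*K1) := by
      have texp : (mu x)⁻¹ * (S1 + (P1 - Sw*d)) + lam*K2 - ((mu x)⁻¹*S1 + lam*K1)
          = (mu x)⁻¹*P1 - ((mu x)⁻¹*Sw)*d + lam*(K2 - K1) := by ring
      rw [texp]
      linarith only [key2, t2, hb2]
    have hfin : ε * (-(D*d) - lam*(2*d)) ≤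
        ε * ((mu x)⁻¹ * (S1 + (P1 - Sw*d)) + lam*K2 - ((mu x)⁻¹*S1 + lam*K1)) :=
      mul_le_mul_of_nonneg_left hbr hε.le
    have h5 : (ε*(1+D+2*lam))*d = d := by rw [hεid, one_mul]
    have h6 : 0 ≤ ε * d := mul_nonneg hε.le hdx
    linarith only [hfin, h5, h6, hdd]
  -- vm is a subsolution: vm ≤ T vm
  have hTvm : ∀ x, vm x ≤ T vm x := by
    intro x
    have h0 : ∑ y, w x y * (vm y - vm x) = 0 :=
      Finset.sum_eq_zero fun y _ => by simp [hvmdef]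
    have hKl : δ ≤ Real.exp (g (v0 x + vm x)) * (Real.exp (g (v0 x + vm x)) - 1)^2 := by
      apply hKlow
      · simp only [hvmdef, hadef]
        linarith [hv0ge x]
      · simp only [hvmdef, hcdef]
        linarith [hv0le x]
    have hlK : A ≤ lam * (Real.exp (g (v0 x + vm x)) * (Real.exp (g (v0 x + vm x)) - 1)^2) := by
      calc A ≤ lam * δ := hlamδ
      _ ≤ _ := mul_le_mul_of_nonneg_left hKl hlam0.le
    simp only [hTdef, h0, mul_zero]
    nlinarith [mul_nonneg hε.le (sub_nonneg.mpr hlK)]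
  -- T maps the box below vp
  have hTvp : ∀ x, T vp x ≤ vp x := by
    intro x
    have hu0 : v0 x + vp x = 0 := by simp [hvpdef]
    have hδ0 : 0 ≤ ∑ j, (if x = p j then (mu (p j))⁻¹ else 0) :=
      Finset.sum_nonneg fun j _ => by
        split_ifs
        · exact (inv_pos.mpr (hmu _)).le
        · exact le_rfl
    have h3 := hLvp x
    simp only [hTdef, hu0, hg0, Real.exp_zero]
    rw [h3]
    have hπ := Real.pi_pos
    nlinarith [mul_nonneg hε.le (mul_nonneg (by positivity : (0:ℝ) ≤ 4*π) hδ0)]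
  have hTub : ∀ v : V → ℝ, (∀ x, v x ≤ vp x) → ∀ x, T v x ≤ vp x :=
    fun v hv x => le_trans (hTmono v vp hv (fun x => le_rfl) x) (hTvp x)
  -- Tarski fixed point
  set Sset : Set (V → ℝ) := {v | (∀ x, vm x ≤ v x) ∧ (∀ x, v x ≤ vp x) ∧ (∀ x, v x ≤ T v x)}
    with hSsetdef
  have hvmS : vm ∈ Sset := ⟨fun x => le_rfl, hmle, hTvm⟩
  have himne : ∀ x, ((fun v : V → ℝ => v x) '' Sset).Nonempty := fun x => ⟨vm x, vm, hvmS, rfl⟩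
  have hbdd : ∀ x, BddAbove ((fun v : V → ℝ => v x) '' Sset) := by
    intro x
    refine ⟨vp x, ?_⟩
    rintro r ⟨v, hv, rfl⟩
    exact hv.2.1 x
  set vs : V → ℝ := fun x => sSup ((fun v : V → ℝ => v x) '' Sset) with hvsdef
  have hle_vs : ∀ v ∈ Sset, ∀ x, v x ≤ vs x := fun v hv x => le_csSup (hbdd x) ⟨v, hv, rfl⟩
  have hvs_vp : ∀ x, vs x ≤ vp x := by
    intro x
    refine csSup_le (himne x) ?_
    rintro r ⟨v, hv, rfl⟩
    exact hv.2.1 x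
  have hvm_vs : ∀ x, vm x ≤ vs x := hle_vs vm hvmS
  have hpost : ∀ x, vs x ≤ T vs x := by
    intro x
    refine csSup_le (himne x) ?_
    rintro r ⟨v, hv, rfl⟩
    exact le_trans (hv.2.2 x) (hTmono v vs (hle_vs v hv) hvs_vp x)
  have hTvsS : T vs ∈ Sset := by
    refine ⟨fun x => le_trans (hvm_vs x) (hpost x), hTub vs hvs_vp, fun x => ?_⟩
    exact hTmono vs (T vs) hpost (hTub vs hvs_vp) x
  have hfix : ∀ x, T vs x = vs x := fun x => le_antisymm (hle_vs (T vs) hTvsS x) (hpost x)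
  -- the equation
  have heq : ∀ x, (mu x)⁻¹ * ∑ y, w x y * (vs y - vs x) =
      -lam * Real.exp (g (v0 x + vs x)) * (Real.exp (g (v0 x + vs x)) - 1) ^ 2 + A := by
    intro x
    have h := hfix x
    simp only [hTdef] at h
    have h2 : ε * ((mu x)⁻¹ * (∑ y, w x y * (vs y - vs x)) +
        lam * (Real.exp (g (v0 x + vs x)) * (Real.exp (g (v0 x + vs x)) - 1)^2) - A) = 0 := by
      linarith
    have h3 := (mul_eq_zero.mp h2).resolve_left (ne_of_gt hε)
    linarith
  -- strictness
  have hules : ∀ x, v0 x + vs x ≤ 0 := by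
    intro x
    have := hvs_vp x
    simp only [hvpdef] at this
    linarith
  have hprop : ∀ b, v0 b + vs b = 0 →
      ((∑ j, (if b = p j then (mu (p j))⁻¹ else 0)) = 0 ∧
        ∀ cy, 0 < w b cy → v0 cy + vs cy = 0) := by
    intro b hb
    have h1 := heq b
    rw [hb, hg0, Real.exp_zero] at h1
    norm_num at h1
    have hmb := hmu b
    have e1 : ∑ y, w b y * (vs y - vs b) = A * mu b := by
      rw [inv_mul_eq_div, div_eq_iff (ne_of_gt hmb)] at h1
      exact h1
    have h2 := hv0 b
    have e2 : ∑ y, w b y * (v0 y - v0 b) =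
        (-(4 * π * N) / M + 4 * π * ∑ j, (if b = p j then (mu (p j))⁻¹ else 0)) * mu b := by
      rw [inv_mul_eq_div, div_eq_iff (ne_of_gt hmb)] at h2
      exact h2
    have hsplit : ∑ y, w b y * (v0 y + vs y) = (∑ y, w b y * (v0 y - v0 b)) +
        ((∑ y, w b y * (vs y - vs b)) + (∑ y, w b y) * (v0 b + vs b)) := by
      rw [Finset.sum_congr rfl (fun y (_ : y ∈ univ) =>
        show w b y * (v0 y + vs y) = w b y * (v0 y - v0 b) + (w b y * (vs y - vs b) + w b y * (v0 b + vs b)) by ring),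
        Finset.sum_add_distrib, Finset.sum_add_distrib, Finset.sum_mul]
    rw [hb, mul_zero, add_zero, e1, e2] at hsplit
    have hsum_eq : ∑ y, w b y * (v0 y + vs y) =
        4 * π * (∑ j, (if b = p j then (mu (p j))⁻¹ else 0)) * mu b := by
      rw [hsplit, hAdef]
      field_simp
      ring
    have hterm_np : ∀ y ∈ (univ : Finset V), w b y * (v0 y + vs y) ≤ 0 := fun y _ =>
      mul_nonpos_iff.mpr (Or.inl ⟨hnonneg b y, hules y⟩)
    have hsum_np : ∑ y, w b y * (v0 y + vs y) ≤ 0 := Finset.sum_nonpos hterm_np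
    have hSd0 : 0 ≤ ∑ j, (if b = p j then (mu (p j))⁻¹ else 0) :=
      Finset.sum_nonneg fun j _ => by
        split_ifs
        · exact (inv_pos.mpr (hmu _)).le
        · exact le_rfl
    have hπ := Real.pi_pos
    have hSd_zero : (∑ j, (if b = p j then (mu (p j))⁻¹ else 0)) = 0 := by
      rcases lt_or_eq_of_le hSd0 with hlt | he
      · exfalso
        have hgt : 0 < 4 * π * (∑ j, (if b = p j then (mu (p j))⁻¹ else 0)) * mu b :=
          mul_pos (mul_pos (by positivity) hlt) hmb
        linarith [hsum_eq ▸ hsum_np]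
      · exact he.symm
    refine ⟨hSd_zero, ?_⟩
    intro cy hcy
    have hzero : ∑ y, w b y * (v0 y + vs y) = 0 := by
      rw [hsum_eq, hSd_zero]
      ring
    have hterm := (Finset.sum_eq_zero_iff_of_nonpos hterm_np).mp hzero cy (Finset.mem_univ cy)
    rcases mul_eq_zero.mp hterm with h | h
    · exact absurd h (ne_of_gt hcy)
    · exact h
  have hstrict : ∀ x, v0 x + vs x < 0 := by
    intro x
    rcases lt_or_eq_of_le (hules x) with h | h
    · exact h
    · exfalso
      have hreach : ∀ y, Relation.ReflTransGen (fun a b => 0 < w a b) x y → v0 y + vs y = 0 := by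
        intro y hy
        induction hy with
        | refl => exact h
        | @tail b cc hab hbc ih => exact (hprop b ih).2 cc hbc
      set j0 : Fin N := ⟨0, hN⟩ with hj0
      have hp0 := hreach (p j0) (hconn x (p j0))
      have hz := (hprop (p j0) hp0).1
      have hterm := (Finset.sum_eq_zero_iff_of_nonneg (fun j _ => by
        split_ifs
        · exact (inv_pos.mpr (hmu _)).le
        · exact le_rfl)).mp hz j0 (Finset.mem_univ j0)
      rw [if_pos rfl] at hterm
      exact (inv_pos.mpr (hmu _)).ne' hterm
  exact ⟨vs, hstrict, heq⟩
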